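/- arXiv:0912.1818 — 6 statements merged into one kernel-verified Lean document; each statement's English description precedes it below -/
import Mathlib

section
/- All zeros of K are real, and they are exactly the points −μ_j, j ≥ 1, interlacing with the poles: b_1 < μ_1 < b_2 < μ_2 < b_3 < ⋯ . That is, K has exactly one zero in each open interval (−b_{j+1}, −b_j), j ≥ 1, and no other zeros in its domain. -/
open Filter Topology

/- Indexing convention: the paper's sequences `(a_k)_{k ≥ 1}`, `(b_k)_{k ≥ 1}` are
encoded as functions `a b : ℕ → ℝ`, where index `k : ℕ` corresponds to the paper's
index `k + 1` (so `b 0 = b_1`, etc.). -/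

/-- `GPK a b z = K(z) = ∑ a_k / (z + b_k)`. -/
noncomputable def GPK (a b : ℕ → ℝ) (z : ℂ) : ℂ := ∑' k : ℕ, (a k : ℂ) / (z + (b k : ℂ))

/-- `GPG a b n z = G_n(z) = z + n² K(z)`. -/
noncomputable def GPG (a b : ℕ → ℝ) (n : ℕ) (z : ℂ) : ℂ := z + (n : ℂ) ^ 2 * GPK a b z

/-! For nonreal `z`, every term `a_k / (z + b_k)` has imaginary part of sign opposite to `Im z`,
so `K z ≠ 0`. On the real axis, `K` is strictly decreasing on each gap `(-b_{j+1}, -b_j)` between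
consecutive poles and runs from `+∞` to `-∞` there, because the pole at the endpoint dominates
while the other terms stay bounded; so it has exactly one zero in each gap. To the right of
`-b_1` all terms are positive. -/

open Set

noncomputable def GPKReal (a b : ℕ → ℝ) (x : ℝ) : ℝ := ∑' k, a k / (x + b k)

theorem GPK_ofReal (a b : ℕ → ℝ) (x : ℝ) : GPK a b x = GPKReal a b x := by
  simp only [GPK, GPKReal, Complex.ofReal_tsum, Complex.ofReal_div, Complex.ofReal_add]

theorem add_tsum_le_tsum_of_le_of_ne {ι : Type*} {f g : ι → ℝ} (hf : Summable f)
    (hg : Summable g) {i : ι} (hgi : g i ≤ 0) (h : ∀ k ≠ i, g k ≤ f k) :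
    f i + ∑' k, g k ≤ ∑' k, f k := by
  classical
  have hite : Summable fun k => if k = i then 0 else f k :=
    hf.summable_of_eq_zero_or_self fun k => by split_ifs <;> simp
  have hle : ∑' k, g k ≤ ∑' k, if k = i then 0 else f k := hg.tsum_le_tsum (fun k => by
    split_ifs with hk
    · exact hk ▸ hgi
    · exact h k hk) hite
  rw [hf.tsum_eq_add_tsum_ite i]
  linarith

theorem tsum_le_add_tsum_of_le_of_ne {ι : Type*} {f g : ι → ℝ} (hf : Summable f)
    (hg : Summable g) {i : ι} (hgi : 0 ≤ g i) (h : ∀ k ≠ i, f k ≤ g k) :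
    ∑' k, f k ≤ f i + ∑' k, g k := by
  have := add_tsum_le_tsum_of_le_of_ne hf.neg hg.neg (neg_nonpos.mpr hgi)
    fun k hk => neg_le_neg (h k hk)
  rw [tsum_neg, tsum_neg] at this
  linarith

theorem tendsto_div_add_nhdsGT {r : ℝ} (hr : 0 < r) (c : ℝ) :
    Tendsto (fun x => r / (x + c)) (𝓝[>] (-c)) atTop := by
  have hshift : Tendsto (fun x => x + c) (𝓝[>] (-c)) (𝓝[>] 0) :=
    tendsto_nhdsWithin_iff.mpr
      ⟨by simpa using ((continuous_add_const c).tendsto (-c)).mono_left nhdsWithin_le_nhds,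
        eventually_nhdsWithin_of_forall fun x (hx : -c < x) => show 0 < x + c by linarith⟩
  simpa only [div_eq_mul_inv, Pi.inv_apply] using hshift.inv_tendsto_nhdsGT_zero.const_mul_atTop hr

theorem tendsto_div_add_nhdsLT {r : ℝ} (hr : 0 < r) (c : ℝ) :
    Tendsto (fun x => r / (x + c)) (𝓝[<] (-c)) atBot := by
  have hshift : Tendsto (fun x => x + c) (𝓝[<] (-c)) (𝓝[<] 0) :=
    tendsto_nhdsWithin_iff.mpr
      ⟨by simpa using ((continuous_add_const c).tendsto (-c)).mono_left nhdsWithin_le_nhds,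
        eventually_nhdsWithin_of_forall fun x (hx : x < -c) => show x + c < 0 by linarith⟩
  simpa only [div_eq_mul_inv, Pi.inv_apply] using hshift.inv_tendsto_nhdsLT_zero.const_mul_atBot hr

theorem im_mul_im_ofReal_div_neg {r : ℝ} (hr : 0 < r) {w : ℂ} (hw : w.im ≠ 0) :
    w.im * ((r : ℂ) / w).im < 0 := by
  have hw0 : 0 < Complex.normSq w := Complex.normSq_pos.mpr fun h => hw (by simp [h])
  have hw2 : 0 < w.im ^ 2 := sq_pos_of_ne_zero hw
  have hterm : w.im * ((r : ℂ) / w).im = -(r * w.im ^ 2 / Complex.normSq w) := by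
    simp only [Complex.div_im, Complex.ofReal_im, Complex.ofReal_re]
    ring
  rw [hterm, neg_lt_zero]
  positivity

section Summability

variable {a b : ℕ → ℝ}

theorem eventually_one_le_norm_add (hb : Tendsto b atTop atTop) (z : ℂ) :
    ∀ᶠ k in atTop, 1 ≤ ‖z + b k‖ := by
  filter_upwards [hb.eventually_ge_atTop (‖z‖ + 1)] with k hk
  calc 1 ≤ z.re + b k := by linarith [neg_abs_le z.re, Complex.abs_re_le_norm z]
    _ = (z + b k).re := by simp
    _ ≤ ‖z + b k‖ := Complex.re_le_norm _

theorem summable_div_add (ha : Summable a) (hb : Tendsto b atTop atTop) (z : ℂ) :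
    Summable fun k => (a k : ℂ) / (z + b k) := by
  refine Summable.of_norm_bounded_eventually_nat ha.abs ?_
  filter_upwards [eventually_one_le_norm_add hb z] with k hk
  rw [norm_div, Complex.norm_real, Real.norm_eq_abs]
  exact div_le_self (abs_nonneg _) hk

theorem summable_div_add_real (ha : Summable a) (hb : Tendsto b atTop atTop) (x : ℝ) :
    Summable fun k => a k / (x + b k) := by
  rw [← Complex.summable_ofReal]
  simpa only [Complex.ofReal_div, Complex.ofReal_add] using summable_div_add ha hb x

end Summability

section Zeros

variable {a b : ℕ → ℝ}

theorem im_mul_im_GPK_neg (ha : ∀ k, 0 < a k) (hs : Summable a) (hb : Tendsto b atTop atTop)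
    {z : ℂ} (hz : z.im ≠ 0) : z.im * (GPK a b z).im < 0 := by
  have hsum := (Complex.hasSum_im (summable_div_add hs hb z).hasSum).mul_left z.im
  have hterm (k : ℕ) : z.im * ((a k : ℂ) / (z + b k)).im < 0 := by
    simpa using im_mul_im_ofReal_div_neg (ha k) (w := z + b k) (by simpa using hz)
  exact hasSum_lt (fun k => (hterm k).le) (hterm 0) hsum hasSum_zero

theorem im_eq_zero_of_GPK_eq_zero (ha : ∀ k, 0 < a k) (hs : Summable a)
    (hb : Tendsto b atTop atTop) {z : ℂ} (h : GPK a b z = 0) : z.im = 0 := by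
  by_contra hz
  simpa [h] using im_mul_im_GPK_neg ha hs hb hz

theorem continuousOn_GPKReal (hs : Summable a) {s : Set ℝ} {d : ℝ} (hd : 0 < d)
    (hsep : ∀ x ∈ s, ∀ k, d ≤ |x + b k|) : ContinuousOn (GPKReal a b) s := by
  refine continuousOn_tsum (u := fun k => |a k| / d) (fun k => ?_) (hs.abs.div_const d)
    fun k x hx => ?_
  · exact continuousOn_const.div (by fun_prop) fun x hx => abs_pos.mp (hd.trans_le (hsep x hx k))
  · rw [norm_div, Real.norm_eq_abs, Real.norm_eq_abs]
    exact div_le_div_of_nonneg_left (abs_nonneg _) hd (hsep x hx k)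

theorem strictAntiOn_GPKReal (ha : ∀ k, 0 < a k) (hs : Summable a) (hb : Tendsto b atTop atTop)
    {s : Set ℝ} (hsign : ∀ x ∈ s, ∀ y ∈ s, ∀ k, 0 < (x + b k) * (y + b k)) :
    StrictAntiOn (GPKReal a b) s := by
  intro x hx y hy hxy
  have hterm (k : ℕ) : a k / (y + b k) < a k / (x + b k) := by
    have hprod := hsign x hx y hy k
    rw [← sub_pos,
      div_sub_div _ _ (left_ne_zero_of_mul hprod.ne') (right_ne_zero_of_mul hprod.ne')]
    exact div_pos (by nlinarith [ha k]) hprod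
  exact hasSum_lt (fun k => (hterm k).le) (hterm 0) (summable_div_add_real hs hb y).hasSum
    (summable_div_add_real hs hb x).hasSum

theorem GPKReal_pos (ha : ∀ k, 0 < a k) (hs : Summable a) (hb : Tendsto b atTop atTop) {x : ℝ}
    (hx : ∀ k, 0 < x + b k) : 0 < GPKReal a b x :=
  (summable_div_add_real hs hb x).tsum_pos (fun k => (div_pos (ha k) (hx k)).le) 0
    (div_pos (ha 0) (hx 0))

theorem exists_mem_Ioo_of_GPKReal_eq_zero (ha : ∀ k, 0 < a k) (hs : Summable a)
    (hb : StrictMono b) (hbt : Tendsto b atTop atTop) {x : ℝ} (hx : ∀ k, x ≠ -b k)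
    (h0 : GPKReal a b x = 0) : ∃ j, x ∈ Ioo (-b (j + 1)) (-b j) := by
  rcases lt_or_ge (b 0) (-x) with hlt | hge
  · obtain ⟨j, hj, hj1⟩ := hb.exists_between_of_tendsto_atTop hbt hlt
    have hne : -b (j + 1) ≠ x := fun h => hx (j + 1) h.symm
    exact ⟨j, lt_of_le_of_ne (by linarith) hne, by linarith⟩
  · have hx0 : 0 < x + b 0 := lt_of_le_of_ne (by linarith) fun h => hx 0 (by linarith)
    exact absurd h0
      (GPKReal_pos ha hs hbt (x := x) fun k => by linarith [hb.monotone k.zero_le]).ne'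

end Zeros

section Gap

variable {a b : ℕ → ℝ} {j : ℕ}

theorem add_neg_of_le_of_lt_neg (hb : Monotone b) {x : ℝ} (hx : x < -b j) {k : ℕ}
    (hk : k ≤ j) : x + b k < 0 := by
  linarith [hb hk]

theorem add_pos_of_lt_of_neg_lt (hb : Monotone b) {x : ℝ} (hx : -b (j + 1) < x) {k : ℕ}
    (hk : j < k) : 0 < x + b k := by
  linarith [hb hk]

theorem continuousOn_GPKReal_Ioo (hs : Summable a) (hb : Monotone b) (j : ℕ) :
    ContinuousOn (GPKReal a b) (Ioo (-b (j + 1)) (-b j)) := by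
  intro x hx
  obtain ⟨d, hd, hxd₁, hxd₂⟩ : ∃ d, 0 < d ∧ -b (j + 1) + d < x ∧ x < -b j - d := by
    refine ⟨min (x + b (j + 1)) (-b j - x) / 2, half_pos (lt_min ?_ ?_), ?_, ?_⟩ <;>
      linarith [hx.1, hx.2, min_le_left (x + b (j + 1)) (-b j - x),
        min_le_right (x + b (j + 1)) (-b j - x)]
  have hsep : ∀ y ∈ Icc (-b (j + 1) + d) (-b j - d), ∀ k, d ≤ |y + b k| := by
    intro y hy k
    rcases le_or_gt k j with hk | hk
    · exact le_abs.mpr (Or.inr (by linarith [hb hk, hy.2]))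
    · exact le_abs.mpr (Or.inl (by linarith [hb (Nat.succ_le_of_lt hk), hy.1]))
  have hmem : Icc (-b (j + 1) + d) (-b j - d) ∈ 𝓝 x := Icc_mem_nhds hxd₁ hxd₂
  exact ((continuousOn_GPKReal hs hd hsep).continuousAt hmem).continuousWithinAt

theorem strictAntiOn_GPKReal_Ioo (ha : ∀ k, 0 < a k) (hs : Summable a) (hb : StrictMono b)
    (hbt : Tendsto b atTop atTop) (j : ℕ) :
    StrictAntiOn (GPKReal a b) (Ioo (-b (j + 1)) (-b j)) := by
  refine strictAntiOn_GPKReal ha hs hbt fun x hx y hy k => ?_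
  rcases le_or_gt k j with hk | hk
  · exact mul_pos_of_neg_of_neg (add_neg_of_le_of_lt_neg hb.monotone hx.2 hk)
      (add_neg_of_le_of_lt_neg hb.monotone hy.2 hk)
  · exact mul_pos (add_pos_of_lt_of_neg_lt hb.monotone hx.1 hk)
      (add_pos_of_lt_of_neg_lt hb.monotone hy.1 hk)

-- Every term with `k ≠ j + 1` is at least `a k / (x + b j)`: for `k ≤ j` since `t ↦ 1 / t`
-- decreases on `t < 0`, for `k > j + 1` since it is positive.
theorem div_add_add_tsum_div_le_GPKReal (ha : ∀ k, 0 ≤ a k) (hs : Summable a) (hb : Monotone b)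
    (hbt : Tendsto b atTop atTop) {x : ℝ} (hx : x ∈ Ioo (-b (j + 1)) (-b j)) :
    a (j + 1) / (x + b (j + 1)) + (∑' k, a k) / (x + b j) ≤ GPKReal a b x := by
  have hneg := add_neg_of_le_of_lt_neg hb hx.2 le_rfl
  rw [← tsum_div_const]
  refine add_tsum_le_tsum_of_le_of_ne (summable_div_add_real hs hbt x) (hs.div_const _)
    (div_nonpos_of_nonneg_of_nonpos (ha _) hneg.le) fun k _ => ?_
  rcases le_or_gt k j with hk | hk
  · simpa only [mul_one_div] using mul_le_mul_of_nonneg_left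
      (one_div_le_one_div_of_neg_of_le hneg (by linarith [hb hk])) (ha k)
  · exact (div_nonpos_of_nonneg_of_nonpos (ha k) hneg.le).trans
      (div_nonneg (ha k) (add_pos_of_lt_of_neg_lt hb hx.1 hk).le)

theorem GPKReal_le_div_add_add_tsum_div (ha : ∀ k, 0 ≤ a k) (hs : Summable a) (hb : Monotone b)
    (hbt : Tendsto b atTop atTop) {x : ℝ} (hx : x ∈ Ioo (-b (j + 1)) (-b j)) :
    GPKReal a b x ≤ a j / (x + b j) + (∑' k, a k) / (x + b (j + 1)) := by
  have hpos := add_pos_of_lt_of_neg_lt hb hx.1 j.lt_succ_self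
  rw [← tsum_div_const]
  refine tsum_le_add_tsum_of_le_of_ne (summable_div_add_real hs hbt x) (hs.div_const _)
    (div_nonneg (ha _) hpos.le) fun k hkj => ?_
  rcases lt_or_gt_of_ne hkj with hk | hk
  · exact (div_nonpos_of_nonneg_of_nonpos (ha k)
      (add_neg_of_le_of_lt_neg hb hx.2 hk.le).le).trans (div_nonneg (ha k) hpos.le)
  · exact div_le_div_of_nonneg_left (ha k) hpos (by linarith [hb hk])

theorem tendsto_GPKReal_nhdsGT (ha : ∀ k, 0 < a k) (hs : Summable a) (hb : StrictMono b)
    (hbt : Tendsto b atTop atTop) (j : ℕ) :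
    Tendsto (GPKReal a b) (𝓝[>] (-b (j + 1))) atTop := by
  have hgap : -b (j + 1) < -b j := neg_lt_neg (hb j.lt_succ_self)
  have hrest : Tendsto (fun x => (∑' k, a k) / (x + b j)) (𝓝[>] (-b (j + 1)))
      (𝓝 ((∑' k, a k) / (-b (j + 1) + b j))) :=
    tendsto_nhdsWithin_of_tendsto_nhds (continuousAt_const.div (by fun_prop)
      (by linarith)).tendsto
  refine tendsto_atTop_mono' _ ?_ ((tendsto_div_add_nhdsGT (ha (j + 1)) _).atTop_add hrest)
  filter_upwards [Ioo_mem_nhdsGT hgap] with x hx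
  exact div_add_add_tsum_div_le_GPKReal (fun k => (ha k).le) hs hb.monotone hbt hx

theorem tendsto_GPKReal_nhdsLT (ha : ∀ k, 0 < a k) (hs : Summable a) (hb : StrictMono b)
    (hbt : Tendsto b atTop atTop) (j : ℕ) :
    Tendsto (GPKReal a b) (𝓝[<] (-b j)) atBot := by
  have hgap : -b (j + 1) < -b j := neg_lt_neg (hb j.lt_succ_self)
  have hrest : Tendsto (fun x => (∑' k, a k) / (x + b (j + 1))) (𝓝[<] (-b j))
      (𝓝 ((∑' k, a k) / (-b j + b (j + 1)))) :=
    tendsto_nhdsWithin_of_tendsto_nhds (continuousAt_const.div (by fun_prop)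
      (by linarith)).tendsto
  refine tendsto_atBot_mono' _ ?_ ((tendsto_div_add_nhdsLT (ha j) _).atBot_add hrest)
  filter_upwards [Ioo_mem_nhdsLT hgap] with x hx
  exact GPKReal_le_div_add_add_tsum_div (fun k => (ha k).le) hs hb.monotone hbt hx

theorem existsUnique_GPKReal_eq_zero (ha : ∀ k, 0 < a k) (hs : Summable a) (hb : StrictMono b)
    (hbt : Tendsto b atTop atTop) (j : ℕ) :
    ∃! x, x ∈ Ioo (-b (j + 1)) (-b j) ∧ GPKReal a b x = 0 := by
  have hgap : -b (j + 1) < -b j := neg_lt_neg (hb j.lt_succ_self)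
  obtain ⟨x, hx, hx0⟩ := isPreconnected_Ioo.intermediate_value_Iii
    (le_principal_iff.mpr (Ioo_mem_nhdsLT hgap)) (le_principal_iff.mpr (Ioo_mem_nhdsGT hgap))
    (continuousOn_GPKReal_Ioo hs hb.monotone j) (tendsto_GPKReal_nhdsLT ha hs hb hbt j)
    (tendsto_GPKReal_nhdsGT ha hs hb hbt j) (mem_univ 0)
  exact ⟨x, ⟨hx, hx0⟩, fun y ⟨hy, hy0⟩ =>
    (strictAntiOn_GPKReal_Ioo ha hs hb hbt j).injOn hy hx (hy0.trans hx0.symm)⟩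

end Gap

theorem K_zeros_real_interlacing_general
    (a b : ℕ → ℝ) (α : ℝ)
    (ha : ∀ k, 0 < a k) (hsum : HasSum a (α ^ 2))
    (hbmono : StrictMono b) (hbtop : Tendsto b atTop atTop) :
    -- all zeros of K are real
    (∀ z : ℂ, (∀ k, z ≠ -(b k : ℂ)) → GPK a b z = 0 → z.im = 0) ∧
    -- exactly one zero in each interval (-b_{j+1}, -b_j)
    (∀ j : ℕ, ∃! x : ℝ, x ∈ Set.Ioo (-(b (j + 1))) (-(b j)) ∧ GPK a b (x : ℂ) = 0) ∧
    -- no other zeros: every real zero lies in one of these intervals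
    (∀ x : ℝ, (∀ k, x ≠ -(b k)) → GPK a b (x : ℂ) = 0 →
      ∃ j : ℕ, x ∈ Set.Ioo (-(b (j + 1))) (-(b j))) := by
  have hs := hsum.summable
  refine ⟨fun z _ h0 => im_eq_zero_of_GPK_eq_zero ha hs hbtop h0, fun j => ?_,
    fun x hx h0 => ?_⟩
  · simpa only [GPK_ofReal, Complex.ofReal_eq_zero] using
      existsUnique_GPKReal_eq_zero ha hs hbmono hbtop j
  · rw [GPK_ofReal, Complex.ofReal_eq_zero] at h0
    exact exists_mem_Ioo_of_GPKReal_eq_zero ha hs hbmono hbtop hx h0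

/-- All zeros of `K` are real, there is exactly one zero `-μ_j` in each interval
`(-b_{j+1}, -b_j)`, and there are no other zeros in the domain of `K`. -/
theorem K_zeros_real_interlacing
    (a b : ℕ → ℝ) (α : ℝ)
    (ha : ∀ k, 0 < a k) (hα : 0 < α) (hsum : HasSum a (α ^ 2))
    (hb0 : 0 ≤ b 0) (hbmono : StrictMono b) (hbtop : Tendsto b atTop atTop) :
    -- all zeros of K are real
    (∀ z : ℂ, (∀ k, z ≠ -(b k : ℂ)) → GPK a b z = 0 → z.im = 0) ∧
    -- exactly one zero in each interval (-b_{j+1}, -b_j)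
    (∀ j : ℕ, ∃! x : ℝ, x ∈ Set.Ioo (-(b (j + 1))) (-(b j)) ∧ GPK a b (x : ℂ) = 0) ∧
    -- no other zeros: every real zero lies in one of these intervals
    (∀ x : ℝ, (∀ k, x ≠ -(b k)) → GPK a b (x : ℂ) = 0 →
      ∃ j : ℕ, x ∈ Set.Ioo (-(b (j + 1))) (-(b j))) :=
  K_zeros_real_interlacing_general a b α ha hsum hbmono hbtop
end

section
/- For each j ≥ 1, the restriction of K to the real interval (−b_{j+1}, −b_j) is real-valued and strictly decreasing, with K(x) → +∞ as x → −b_{j+1}⁺ and K(x) → −∞ as x → −b_j⁻; consequently K maps (−b_{j+1}, −b_j) bijectively onto ℝ. Moreover K(x) > 0 for all real x > −b_1. -/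
open Filter Topology

lemma auxDivLt {A c d : ℝ} (hA : 0 < A) (hcd : c < d) (h : 0 < c * d) : A / d < A / c := by
  have hc : c ≠ 0 := fun h0 => by simp [h0] at h
  have hd : d ≠ 0 := fun h0 => by simp [h0] at h
  have key : A / d - A / c = A * (c - d) / (c * d) := by field_simp
  have h2 : A / d - A / c < 0 := by
    rw [key]; exact div_neg_of_neg_of_pos (by nlinarith) h
  linarith

lemma auxSummable {a b : ℕ → ℝ} (hsa : Summable a) (ha : ∀ k, 0 < a k)
    (hbtop : Tendsto b atTop atTop) (x : ℝ) :
    Summable (fun k => a k / (x + b k)) := by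
  have hb' : Tendsto (fun k => x + b k) atTop atTop := tendsto_atTop_add_const_left _ x hbtop
  have h1 : ∀ᶠ k in atTop, (1:ℝ) ≤ x + b k := hb'.eventually (eventually_ge_atTop 1)
  apply hsa.of_norm_bounded_eventually
  rw [Nat.cofinite_eq_atTop]
  filter_upwards [h1] with k hk
  rw [Real.norm_eq_abs, abs_div, abs_of_pos (ha k), abs_of_pos (by linarith : (0:ℝ) < x + b k)]
  exact div_le_self (ha k).le (by linarith)

lemma GPK_ofReal_s3 (a b : ℕ → ℝ) (x : ℝ) :
    GPK a b (x:ℂ) = ((∑' k, a k / (x + b k) : ℝ) : ℂ) := by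
  rw [GPK, Complex.ofReal_tsum]
  congr 1; funext k; push_cast; ring

/-- On each real interval `(-b_{j+1}, -b_j)`, `K` is real-valued, strictly decreasing,
tends to `+∞` at the left endpoint and to `-∞` at the right endpoint, and maps the
interval bijectively onto `ℝ`; moreover `K(x) > 0` for real `x > -b_1`. -/
theorem K_real_branches
    (a b : ℕ → ℝ) (α : ℝ)
    (ha : ∀ k, 0 < a k) (hα : 0 < α) (hsum : HasSum a (α ^ 2))
    (hb0 : 0 ≤ b 0) (hbmono : StrictMono b) (hbtop : Tendsto b atTop atTop) :
    (∀ j : ℕ,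
      -- real-valued on (-b_{j+1}, -b_j)
      (∀ x ∈ Set.Ioo (-(b (j + 1))) (-(b j)), (GPK a b (x : ℂ)).im = 0) ∧
      -- strictly decreasing
      StrictAntiOn (fun x : ℝ => (GPK a b (x : ℂ)).re) (Set.Ioo (-(b (j + 1))) (-(b j))) ∧
      -- K(x) → +∞ as x → (-b_{j+1})⁺
      Tendsto (fun x : ℝ => (GPK a b (x : ℂ)).re) (𝓝[>] (-(b (j + 1)))) atTop ∧
      -- K(x) → -∞ as x → (-b_j)⁻
      Tendsto (fun x : ℝ => (GPK a b (x : ℂ)).re) (𝓝[<] (-(b j))) atBot ∧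
      -- bijective onto ℝ
      Set.BijOn (fun x : ℝ => (GPK a b (x : ℂ)).re)
        (Set.Ioo (-(b (j + 1))) (-(b j))) Set.univ) ∧
    -- K(x) > 0 (and real) for x > -b_1
    (∀ x : ℝ, -(b 0) < x → (GPK a b (x : ℂ)).im = 0 ∧ 0 < (GPK a b (x : ℂ)).re) := by
  classical
  have hsa : Summable a := hsum.summable
  set Kr : ℝ → ℝ := fun x => ∑' k, a k / (x + b k) with hKr
  have him : ∀ x : ℝ, (GPK a b (x:ℂ)).im = 0 := fun x => by
    rw [GPK_ofReal_s3]; simp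
  have hrefn : (fun x : ℝ => (GPK a b (x:ℂ)).re) = Kr := by
    funext x; rw [GPK_ofReal_s3]; simp [hKr]
  have hbm := hbmono.monotone
  rw [hrefn]  -- might fail; handled below
  constructor
  · intro j
    set p : ℝ := -(b (j+1)) with hp
    set q : ℝ := -(b j) with hq
    have hpq : p < q := neg_lt_neg (hbmono (lt_add_one j))
    have hneg : ∀ x : ℝ, x < q → ∀ k ≤ j, x + b k < 0 := by
      intro x hx k hk
      have : b k ≤ b j := hbm hk
      rw [hq] at hx; linarith
    have hpos : ∀ x : ℝ, p < x → ∀ k, j < k → 0 < x + b k := by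
      intro x hx k hk
      have : b (j+1) ≤ b k := hbm hk
      rw [hp] at hx; linarith
    have hsummK : ∀ x : ℝ, Summable (fun k => a k / (x + b k)) :=
      fun x => auxSummable hsa ha hbtop x
    have hanti : StrictAntiOn Kr (Set.Ioo p q) := by
      intro x hx y hy hxy
      have hterm : ∀ k : ℕ, a k / (y + b k) < a k / (x + b k) := by
        intro k
        refine auxDivLt (ha k) (by linarith) ?_
        rcases le_or_gt k j with h | h
        · exact mul_pos_of_neg_of_neg (hneg x hx.2 k h) (hneg y hy.2 k h)
        · exact mul_pos (hpos x hx.1 k h) (hpos y hy.1 k h)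
      exact Summable.tsum_lt_tsum (i := 0) (fun k => (hterm k).le) (hterm 0) (hsummK y) (hsummK x)
    set m : ℝ := (p + q)/2 with hm
    have hpm : p < m := by rw [hm]; linarith
    have hmq : m < q := by rw [hm]; linarith
    have hmb : 0 < m + b (j+1) := by
      have := hpm; rw [hp] at this; linarith
    have htop : Tendsto Kr (𝓝[>] p) atTop := by
      set C : ℝ := ∑ k ∈ Finset.range (j+1), a k / (m + b k) with hC
      have key : ∀ x ∈ Set.Ioo p m, C + a (j+1) * (x + b (j+1))⁻¹ ≤ Kr x := by
        intro x hx
        have hxq : x < q := hx.2.trans hmq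
        have h1 : ∑ k ∈ Finset.range (j+2), a k / (x + b k) ≤ Kr x := by
          refine Summable.sum_le_tsum _ (fun k hk => ?_) (hsummK x)
          have hk' : j < k := by
            by_contra hcon
            exact hk (Finset.mem_range.2 (by omega))
          exact le_of_lt (div_pos (ha k) (hpos x hx.1 k hk'))
        rw [Finset.sum_range_succ] at h1
        have h2 : C ≤ ∑ k ∈ Finset.range (j+1), a k / (x + b k) := by
          refine Finset.sum_le_sum (fun k hk => ?_)
          have hkj : k ≤ j := by
            have := Finset.mem_range.1 hk; omega
          refine le_of_lt (auxDivLt (ha k) (by linarith [hx.2]) ?_)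
          exact mul_pos_of_neg_of_neg (hneg x hxq k hkj) (hneg m hmq k hkj)
        have h3 : a (j+1) * (x + b (j+1))⁻¹ = a (j+1) / (x + b (j+1)) :=
          (div_eq_mul_inv _ _).symm
        linarith
      have h0 : p + b (j+1) = 0 := by rw [hp]; ring
      have t1 : Tendsto (fun x : ℝ => x + b (j+1)) (𝓝[>] p) (𝓝[>] (0:ℝ)) := by
        rw [tendsto_nhdsWithin_iff]
        constructor
        · have tc : Tendsto (fun x : ℝ => x + b (j+1)) (𝓝 p) (𝓝 (p + b (j+1))) :=
            (continuous_id.add continuous_const).tendsto p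
          rw [h0] at tc
          exact tc.mono_left nhdsWithin_le_nhds
        · filter_upwards [self_mem_nhdsWithin] with x hx
          have : p < x := hx
          exact Set.mem_Ioi.2 (by linarith)
      have t2 : Tendsto (fun x : ℝ => (x + b (j+1))⁻¹) (𝓝[>] p) atTop :=
        tendsto_inv_nhdsGT_zero.comp t1
      have t3 := t2.const_mul_atTop (ha (j+1))
      have t4 := tendsto_atTop_add_const_left _ C t3
      refine tendsto_atTop_mono' _ ?_ t4
      filter_upwards [Ioo_mem_nhdsGT_of_mem ⟨le_refl p, hpm⟩] with x hx
      exact key x hx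
    have hbot : Tendsto Kr (𝓝[<] q) atBot := by
      set g : ℕ → ℝ := fun k => if k ≤ j then 0 else a k / (m + b k) with hg
      have hmbk : ∀ k, j < k → 0 < m + b k := fun k hk => by
        have : b (j+1) ≤ b k := hbm hk
        linarith
      have hgsum : Summable g := by
        refine Summable.of_nonneg_of_le (fun k => ?_) (fun k => ?_)
          (hsa.mul_right (m + b (j+1))⁻¹)
        · rw [hg]; dsimp only; split
          · exact le_refl _
          · next h =>
            exact le_of_lt (div_pos (ha k) (hmbk k (not_le.1 h)))
        · rw [hg]; dsimp only
          rw [← div_eq_mul_inv]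
          split
          · exact le_of_lt (div_pos (ha k) hmb)
          · next h =>
            have hk := not_le.1 h
            have : b (j+1) ≤ b k := hbm hk
            exact div_le_div_of_nonneg_left (ha k).le hmb (by linarith)
      set C' : ℝ := ∑' k, g k with hC'
      have key : ∀ x ∈ Set.Ioo m q, Kr x ≤ a j * (x + b j)⁻¹ + C' := by
        intro x hx
        have hxp : p < x := hpm.trans hx.1
        have hKx := Summable.tsum_eq_add_tsum_ite (hsummK x) j
        have hsumite : Summable (fun k => if k = j then 0 else a k / (x + b k)) := by
          have heq : (fun k => if k = j then 0 else a k / (x + b k))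
              = Function.update (fun k => a k / (x + b k)) j 0 := by
            funext k; rw [Function.update_apply]
          rw [heq]; exact (hsummK x).update j 0
        have h2 : (∑' k, if k = j then 0 else a k / (x + b k)) ≤ C' := by
          refine Summable.tsum_le_tsum (fun k => ?_) hsumite hgsum
          rcases eq_or_ne k j with rfl | hkj
          · simp [hg]
          · rw [if_neg hkj, hg]; dsimp only
            rcases lt_trichotomy k j with h | h | h
            · rw [if_pos h.le]
              exact div_nonpos_of_nonneg_of_nonpos (ha k).le (hneg x hx.2 k h.le).le
            · exact absurd h hkj
            · rw [if_neg (not_le.2 h)]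
              refine le_of_lt (auxDivLt (ha k) (by linarith [hx.1]) ?_)
              exact mul_pos (hmbk k h) (hpos x hxp k h)
        have h3 : a j * (x + b j)⁻¹ = a j / (x + b j) := (div_eq_mul_inv _ _).symm
        rw [hKr]; dsimp only
        rw [hKx, h3]
        linarith
      have h0 : q + b j = 0 := by rw [hq]; ring
      have t1 : Tendsto (fun x : ℝ => -(x + b j)) (𝓝[<] q) (𝓝[>] (0:ℝ)) := by
        rw [tendsto_nhdsWithin_iff]
        constructor
        · have tc : Tendsto (fun x : ℝ => -(x + b j)) (𝓝 q) (𝓝 (-(q + b j))) :=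
            ((continuous_id.add continuous_const).neg).tendsto q
          rw [h0, neg_zero] at tc
          exact tc.mono_left nhdsWithin_le_nhds
        · filter_upwards [self_mem_nhdsWithin] with x hx
          have : x < q := hx
          have := h0
          exact Set.mem_Ioi.2 (by linarith)
      have t2 : Tendsto (fun x : ℝ => (-(x + b j))⁻¹) (𝓝[<] q) atTop :=
        tendsto_inv_nhdsGT_zero.comp t1
      have t3 := t2.const_mul_atTop (ha j)
      have t4 := tendsto_neg_atTop_atBot.comp t3
      have t5 : Tendsto (fun x : ℝ => a j * (x + b j)⁻¹) (𝓝[<] q) atBot := by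
        have heq : (fun x : ℝ => a j * (x + b j)⁻¹)
            = fun x : ℝ => -(a j * (-(x + b j))⁻¹) := by
          funext x; rw [inv_neg]; ring
        rw [heq]; exact t4
      have t6 := tendsto_atBot_add_const_right _ C' t5
      refine tendsto_atBot_mono' _ ?_ t6
      filter_upwards [Ioo_mem_nhdsLT_of_mem ⟨hmq, le_refl q⟩] with x hx
      exact key x hx
    refine ⟨fun x _ => him x, hanti, htop, hbot, ?_⟩
    refine ⟨fun x _ => trivial, hanti.injOn, ?_⟩
    intro y _
    obtain ⟨x1, hy1, hx1⟩ :=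
      ((htop.eventually (eventually_gt_atTop y)).and
        (Ioo_mem_nhdsGT_of_mem ⟨le_refl p, hpq⟩)).exists
    obtain ⟨x2, hy2, hx2⟩ :=
      ((hbot.eventually (eventually_lt_atBot y)).and
        (Ioo_mem_nhdsLT_of_mem ⟨hx1.2, le_refl q⟩)).exists
    have hx12 : x1 ≤ x2 := hx2.1.le
    set δ : ℝ := min (x1 + b (j+1)) (-(x2 + b j)) with hδdef
    have hδ : 0 < δ := by
      refine lt_min (hpos x1 hx1.1 (j+1) (lt_add_one j)) ?_
      have := hneg x2 hx2.2 j (le_refl j)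
      linarith
    have habs : ∀ (k : ℕ), ∀ x ∈ Set.Icc x1 x2, ‖a k / (x + b k)‖ ≤ a k / δ := by
      intro k x hx
      rw [Real.norm_eq_abs, abs_div, abs_of_pos (ha k)]
      have hlow : δ ≤ |x + b k| := by
        rcases le_or_gt k j with h | h
        · have hb1 : b k ≤ b j := hbm h
          have hd : δ ≤ -(x2 + b j) := min_le_right _ _
          have hxneg : x + b k < 0 := by
            have := hx.2; linarith
          rw [abs_of_neg hxneg]
          have := hx.2; linarith
        · have hb1 : b (j+1) ≤ b k := hbm h
          have hd : δ ≤ x1 + b (j+1) := min_le_left _ _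
          have hxpos : 0 < x + b k := by
            have := hx.1; linarith
          rw [abs_of_pos hxpos]
          have := hx.1; linarith
      exact div_le_div_of_nonneg_left (ha k).le hδ hlow
    have hcont : ContinuousOn Kr (Set.Icc x1 x2) := by
      rw [hKr]
      refine continuousOn_tsum (fun k => ?_) (hsa.div_const δ) habs
      refine ContinuousOn.div continuousOn_const
        ((continuous_id.add continuous_const).continuousOn) (fun x hx => ?_)
      rcases le_or_gt k j with h | h
      · exact (hneg x (lt_of_le_of_lt hx.2 hx2.2) k h).ne
      · exact (hpos x (lt_of_lt_of_le hx1.1 hx.1) k h).ne'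
    obtain ⟨x, hxIcc, hxy⟩ := intermediate_value_Icc' hx12 hcont ⟨hy2.le, hy1.le⟩
    exact ⟨x, ⟨lt_of_lt_of_le hx1.1 hxIcc.1, lt_of_le_of_lt hxIcc.2 hx2.2⟩, hxy⟩
  · intro x hx
    refine ⟨him x, ?_⟩
    rw [GPK_ofReal_s3, Complex.ofReal_re]
    have hposk : ∀ k, 0 < x + b k := fun k => by
      have := hbm (Nat.zero_le k); linarith
    exact Summable.tsum_pos (auxSummable hsa ha hbtop x)
      (fun k => (div_pos (ha k) (hposk k)).le) 0 (div_pos (ha 0) (hposk 0))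
end

section
/- For every integer n ≥ 1, every complex zero of G_n lies in the open left half-plane: if z is outside {−b_k : k ≥ 1} and z + n² K(z) = 0, then Re z < 0. -/
open Filter Topology

/- Suppose `Re z ≥ 0`. Then `Re (z + b_k) ≥ b_k ≥ 0`, so each `a_k / (z + b_k)` has nonnegative real
part, and positive real part as soon as `b_k > 0`, which holds for `k ≥ 2` by strict monotonicity.
The series converges because `‖z + b_k‖ ≥ b_2 > 0` for `k ≥ 2`. Hence `Re K(z) > 0`, and taking real
parts, `Re G_n(z) = Re z + n² Re K(z) > 0`. -/

namespace Complex

lemma ofReal_div_re (r : ℝ) (w : ℂ) : ((r : ℂ) / w).re = r * w.re / normSq w := by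
  rw [div_eq_mul_inv, re_ofReal_mul, inv_re, mul_div_assoc]

lemma ofReal_div_re_nonneg {r : ℝ} {w : ℂ} (hr : 0 ≤ r) (hw : 0 ≤ w.re) :
    0 ≤ ((r : ℂ) / w).re := by
  rw [ofReal_div_re]
  exact div_nonneg (mul_nonneg hr hw) (normSq_nonneg w)

lemma ofReal_div_re_pos {r : ℝ} {w : ℂ} (hr : 0 < r) (hw : 0 < w.re) :
    0 < ((r : ℂ) / w).re := by
  rw [ofReal_div_re]
  exact div_pos (mul_pos hr hw) (normSq_pos.mpr fun h => hw.ne' (by simp [h]))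

lemma re_tsum_pos {ι : Type*} {f : ι → ℂ} (hf : Summable f) (hnonneg : ∀ i, 0 ≤ (f i).re)
    (i : ι) (hi : 0 < (f i).re) : 0 < (∑' i, f i).re := by
  rw [re_tsum hf]
  exact (hasSum_re hf.hasSum).summable.tsum_pos hnonneg i hi

lemma summable_ofReal_div_of_le_norm {ι : Type*} {r : ι → ℝ} {w : ι → ℂ} (hr : Summable r)
    {c : ℝ} (hc : 0 < c) (hw : ∀ᶠ i in cofinite, c ≤ ‖w i‖) :
    Summable fun i => (r i : ℂ) / w i := by
  refine .of_norm_bounded_eventually (hr.abs.div_const c) ?_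
  filter_upwards [hw] with i hi
  rw [norm_div, norm_real, Real.norm_eq_abs]
  exact div_le_div_of_nonneg_left (abs_nonneg _) hc hi

end Complex

open Complex

section

variable {a b : ℕ → ℝ} {z : ℂ}

lemma le_re_add_ofReal (hz : 0 ≤ z.re) (k : ℕ) : b k ≤ (z + b k).re := by
  simpa using hz

lemma summable_GPK (hsum : Summable a) (hb0 : 0 ≤ b 0) (hb : StrictMono b) (hz : 0 ≤ z.re) :
    Summable fun k => (a k : ℂ) / (z + b k) := by
  refine summable_ofReal_div_of_le_norm hsum (hb0.trans_lt (hb zero_lt_one)) ?_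
  filter_upwards [eventually_cofinite_ne 0] with k hk
  calc b 1 ≤ b k := hb.monotone (Nat.one_le_iff_ne_zero.mpr hk)
    _ ≤ (z + b k).re := le_re_add_ofReal hz k
    _ ≤ ‖z + b k‖ := re_le_norm _

lemma GPK_re_pos (ha : ∀ k, 0 < a k) (hsum : Summable a) (hb0 : 0 ≤ b 0) (hb : StrictMono b)
    (hz : 0 ≤ z.re) : 0 < (GPK a b z).re := by
  have hb_nonneg (k : ℕ) : 0 ≤ b k := hb0.trans (hb.monotone k.zero_le)
  refine re_tsum_pos (summable_GPK hsum hb0 hb hz)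
    (fun k => ofReal_div_re_nonneg (ha k).le ((hb_nonneg k).trans (le_re_add_ofReal hz k))) 1
    (ofReal_div_re_pos (ha 1) ((hb0.trans_lt (hb zero_lt_one)).trans_le (le_re_add_ofReal hz 1)))

lemma GPG_re (n : ℕ) : (GPG a b n z).re = z.re + (n : ℝ) ^ 2 * (GPK a b z).re := by
  rw [GPG, add_re, ← ofReal_natCast, ← ofReal_pow, re_ofReal_mul]

end

theorem spectrum_in_left_half_plane_general
    (a b : ℕ → ℝ) (α : ℝ)
    (ha : ∀ k, 0 < a k) (hsum : HasSum a (α ^ 2))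
    (hb0 : 0 ≤ b 0) (hbmono : StrictMono b)
    (n : ℕ) (hn : 1 ≤ n)
    (z : ℂ) (hzero : GPG a b n z = 0) :
    z.re < 0 := by
  by_contra! hz
  have hK := GPK_re_pos ha hsum.summable hb0 hbmono hz
  have hn2 : (0 : ℝ) < (n : ℝ) ^ 2 := pow_pos (Nat.cast_pos.mpr hn) 2
  have hG : (GPG a b n z).re = 0 := by rw [hzero, zero_re]
  rw [GPG_re] at hG
  nlinarith

/-- Every zero of `G_n` lies in the open left half plane. -/
theorem spectrum_in_left_half_plane
    (a b : ℕ → ℝ) (α : ℝ)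
    (ha : ∀ k, 0 < a k) (hα : 0 < α) (hsum : HasSum a (α ^ 2))
    (hb0 : 0 ≤ b 0) (hbmono : StrictMono b) (hbtop : Tendsto b atTop atTop)
    (n : ℕ) (hn : 1 ≤ n)
    (z : ℂ) (hz : ∀ k, z ≠ -(b k : ℂ)) (hzero : GPG a b n z = 0) :
    z.re < 0 :=
  spectrum_in_left_half_plane_general a b α ha hsum hb0 hbmono n hn z hzero
end

section
/- Let 0 < δ < π. Then z · K(z) → α² as |z| → ∞ within the sector {z ≠ 0 : |arg z| ≤ π − δ}; equivalently, K(z) = (α²/z)(1 + o(1)) in this sector. In particular, for every ε > 0 there exists R such that |z K(z) − α²| < ε for all z in the sector with |z| ≥ R. -/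
/-! In the sector `|arg z| ≤ π - δ` one has `‖z + s‖ ≥ sin δ · ‖z‖` for every `s ≥ 0`, so the
terms `z a_k / (z + b_k)` of `z K(z)` are bounded by `|a_k| / sin δ` uniformly in `z`. Each term
tends to `a_k` as `‖z‖ → ∞`, and dominated convergence for series (Tannery's theorem) gives
`z K(z) → ∑ a_k = α²`. -/

open Filter Topology

open Bornology

lemma tendsto_mul_div_add_cobounded {𝕜 : Type*} [NormedField 𝕜] (c w : 𝕜) :
    Tendsto (fun z => z * (c / (z + w))) (cobounded 𝕜) (𝓝 c) := by
  have hinv : Tendsto (fun z => (z + w)⁻¹) (cobounded 𝕜) (𝓝 0) :=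
    tendsto_inv₀_cobounded.comp (tendsto_add_const_cobounded w)
  have hne : ∀ᶠ z in cobounded 𝕜, z + w ≠ 0 :=
    (tendsto_add_const_cobounded w).eventually (eventually_ne_cobounded 0)
  have hlim := (hinv.const_mul (c * w)).const_sub c
  rw [mul_zero, sub_zero] at hlim
  -- `z * (c / (z + w)) = c - c * w * (z + w)⁻¹` away from `z = -w`
  refine hlim.congr' (hne.mono fun z hz => ?_)
  field_simp
  ring

namespace Complex

lemma sin_mul_norm_le_norm_add_ofReal {δ : ℝ} (hδ : 0 ≤ δ) {z : ℂ}
    (hz : |z.arg| ≤ Real.pi - δ) {s : ℝ} (hs : 0 ≤ s) :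
    Real.sin δ * ‖z‖ ≤ ‖z + s‖ := by
  have hcos : -Real.cos δ ≤ Real.cos z.arg := by
    rw [← Real.cos_abs z.arg, ← Real.cos_pi_sub]
    exact Real.cos_le_cos_of_nonneg_of_le_pi (abs_nonneg _) (by linarith) hz
  have hre : -(‖z‖ * Real.cos δ) ≤ z.re := by
    rw [← norm_mul_cos_arg]; nlinarith [norm_nonneg z]
  have hsq : (Real.sin δ * ‖z‖) ^ 2 ≤ ‖z + s‖ ^ 2 := by
    have hnorm : ‖z + s‖ ^ 2 = ‖z‖ ^ 2 + 2 * s * z.re + s ^ 2 := by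
      simp only [Complex.sq_norm, normSq_apply, add_re, add_im, ofReal_re, ofReal_im]
      ring
    -- `‖z + s‖² - (sin δ ‖z‖)² ≥ (s - ‖z‖ cos δ)²`
    nlinarith [Real.sin_sq_add_cos_sq δ, sq_nonneg (s - ‖z‖ * Real.cos δ)]
  exact abs_le_of_sq_le_sq' hsq (norm_nonneg _) |>.2

lemma norm_mul_div_add_ofReal_le {δ : ℝ} (hδ0 : 0 < δ) (hδπ : δ < Real.pi) {z : ℂ}
    (hz : |z.arg| ≤ Real.pi - δ) (c : ℂ) {s : ℝ} (hs : 0 ≤ s) :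
    ‖z * (c / (z + s))‖ ≤ ‖c‖ / Real.sin δ := by
  have hsin : 0 < Real.sin δ := Real.sin_pos_of_pos_of_lt_pi hδ0 hδπ
  rcases eq_or_ne (z + s) 0 with h | h
  · simp only [h, div_zero, mul_zero, norm_zero]; positivity
  rw [norm_mul, norm_div, le_div_iff₀ hsin]
  calc ‖z‖ * (‖c‖ / ‖z + s‖) * Real.sin δ = ‖c‖ * (Real.sin δ * ‖z‖) / ‖z + s‖ := by ring
    _ ≤ ‖c‖ * ‖z + s‖ / ‖z + s‖ := by gcongr; exact sin_mul_norm_le_norm_add_ofReal hδ0.le hz hs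
    _ = ‖c‖ := mul_div_cancel_right₀ _ (norm_ne_zero_iff.2 h)

theorem tendsto_mul_tsum_div_add_ofReal {ι : Type*} {a : ι → ℂ} (ha : Summable (‖a ·‖))
    {b : ι → ℝ} (hb : ∀ k, 0 ≤ b k) {δ : ℝ} (hδ0 : 0 < δ) (hδπ : δ < Real.pi) :
    Tendsto (fun z : ℂ => z * ∑' k, a k / (z + b k))
      (cobounded ℂ ⊓ 𝓟 {z | |z.arg| ≤ Real.pi - δ}) (𝓝 (∑' k, a k)) := by
  simp only [← tsum_mul_left]
  refine tendsto_tsum_of_dominated_convergence (ha.div_const (Real.sin δ))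
    (fun k => (tendsto_mul_div_add_cobounded _ _).mono_left inf_le_left) ?_
  filter_upwards [mem_inf_of_right (mem_principal_self _)] with z hz k
  exact norm_mul_div_add_ofReal_le hδ0 hδπ hz _ (hb k)

end Complex

theorem zK_tendsto_in_sector_general
    (a b : ℕ → ℝ) (α : ℝ)
    (hsum : HasSum a (α ^ 2))
    (hb0 : 0 ≤ b 0) (hbmono : StrictMono b)
    (δ : ℝ) (hδ0 : 0 < δ) (hδπ : δ < Real.pi) :
    ∀ ε : ℝ, 0 < ε → ∃ R : ℝ, ∀ z : ℂ, z ≠ 0 → |z.arg| ≤ Real.pi - δ →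
      R ≤ ‖z‖ → ‖z * GPK a b z - (α : ℂ) ^ 2‖ < ε := by
  have hb : ∀ k, 0 ≤ b k := fun k => hb0.trans (hbmono.monotone k.zero_le)
  have hlim := Complex.tendsto_mul_tsum_div_add_ofReal (a := fun k => (a k : ℂ))
    (by simpa using hsum.summable.abs) hb hδ0 hδπ
  rw [← Complex.ofReal_tsum, hsum.tsum_eq] at hlim
  intro ε hε
  obtain ⟨R, -, hR⟩ := ((hasBasis_cobounded_norm.inf_principal _).tendsto_iff
    Metric.nhds_basis_ball).1 hlim ε hε
  refine ⟨R, fun z _ hz hRz => ?_⟩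
  simpa [GPK, dist_eq_norm] using hR z ⟨hRz, hz⟩

/-- `z K(z) → α²` as `|z| → ∞` in the sector `|arg z| ≤ π - δ`, i.e.
`K(z) = (α²/z)(1 + o(1))` there. -/
theorem zK_tendsto_in_sector
    (a b : ℕ → ℝ) (α : ℝ)
    (ha : ∀ k, 0 < a k) (hα : 0 < α) (hsum : HasSum a (α ^ 2))
    (hb0 : 0 ≤ b 0) (hbmono : StrictMono b) (hbtop : Tendsto b atTop atTop)
    (δ : ℝ) (hδ0 : 0 < δ) (hδπ : δ < Real.pi) :
    ∀ ε : ℝ, 0 < ε → ∃ R : ℝ, ∀ z : ℂ, z ≠ 0 → |z.arg| ≤ Real.pi - δ →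
      R ≤ ‖z‖ → ‖z * GPK a b z - (α : ℂ) ^ 2‖ < ε :=
  zK_tendsto_in_sector_general a b α hsum hb0 hbmono δ hδ0 hδπ
end

section
/- Fix j ≥ 1 and suppose that for every integer n ≥ 1 the real number λ_n satisfies −b_{j+1} < λ_n < −μ_j and λ_n + n² K(λ_n) = 0. Then λ_n → −μ_j as n → ∞. -/
open Filter Topology

/-- The real version of `K`. -/
noncomputable def KR (a b : ℕ → ℝ) (x : ℝ) : ℝ := ∑' k : ℕ, a k / (x + b k)

lemma GPK_real (a b : ℕ → ℝ) (x : ℝ) : GPK a b (x : ℂ) = (KR a b x : ℂ) := by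
  rw [GPK, KR, Complex.ofReal_tsum]
  refine tsum_congr fun k => ?_
  push_cast
  ring

lemma KR_summable (a b : ℕ → ℝ) (α : ℝ) (ha : ∀ k, 0 < a k) (hsum : HasSum a (α ^ 2))
    (hbmono : StrictMono b) (j : ℕ) (x : ℝ) (hx : -(b (j + 1)) < x) :
    Summable (fun k => a k / (x + b k)) := by
  rw [← summable_nat_add_iff (j + 1)]
  have hc : 0 < x + b (j + 1) := by linarith
  refine Summable.of_nonneg_of_le (fun k => ?_) (fun k => ?_)
    (((summable_nat_add_iff (j + 1)).2 hsum.summable).mul_right (1 / (x + b (j + 1))))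
  · have hbk : b (j + 1) ≤ b (k + (j + 1)) := hbmono.monotone (Nat.le_add_left _ _)
    exact div_nonneg (ha _).le (by linarith)
  · have hbk : b (j + 1) ≤ b (k + (j + 1)) := hbmono.monotone (Nat.le_add_left _ _)
    rw [div_eq_mul_one_div]
    exact mul_le_mul_of_nonneg_left
      (one_div_le_one_div_of_le hc (by linarith)) (ha _).le

lemma term_mono (a b : ℕ → ℝ) (ha : ∀ k, 0 < a k) (hbmono : StrictMono b)
    (j : ℕ) (m : ℝ) (hbm : b j < m) (x y : ℝ) (hx : -(b (j + 1)) < x) (hxy : x ≤ y)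
    (hy : y ≤ -m) (k : ℕ) : a k / (y + b k) ≤ a k / (x + b k) := by
  rcases le_or_gt k j with hk | hk
  · have hbk : b k ≤ b j := hbmono.monotone hk
    have h1 : y + b k < 0 := by linarith
    have h2 : x + b k ≤ y + b k := by linarith
    calc a k / (y + b k) = a k * (1 / (y + b k)) := by ring
      _ ≤ a k * (1 / (x + b k)) :=
          mul_le_mul_of_nonneg_left (one_div_le_one_div_of_neg_of_le h1 h2) (ha k).le
      _ = a k / (x + b k) := by ring
  · have hbk : b (j + 1) ≤ b k := hbmono.monotone hk
    have h1 : 0 < x + b k := by linarith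
    calc a k / (y + b k) = a k * (1 / (y + b k)) := by ring
      _ ≤ a k * (1 / (x + b k)) :=
          mul_le_mul_of_nonneg_left (one_div_le_one_div_of_le h1 (by linarith)) (ha k).le
      _ = a k / (x + b k) := by ring

/-- If for every `n ≥ 1` the real number `λ_n ∈ (-b_{j+1}, -μ_j)` is a zero of
`G_n`, then `λ_n → -μ_j`. -/
theorem real_zero_tendsto
    (a b : ℕ → ℝ) (α : ℝ)
    (ha : ∀ k, 0 < a k) (hα : 0 < α) (hsum : HasSum a (α ^ 2))
    (hb0 : 0 ≤ b 0) (hbmono : StrictMono b) (hbtop : Tendsto b atTop atTop)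
    (μ : ℕ → ℝ)
    (hμ : ∀ j, b j < μ j ∧ μ j < b (j + 1) ∧ GPK a b (-(μ j : ℂ)) = 0)
    (j : ℕ) (lam : ℕ → ℝ)
    (hlam : ∀ n : ℕ, 1 ≤ n → -(b (j + 1)) < lam n ∧ lam n < -(μ j) ∧
      (lam n : ℂ) + (n : ℂ) ^ 2 * GPK a b (lam n : ℂ) = 0) :
    Tendsto lam atTop (𝓝 (-(μ j))) := by
  obtain ⟨hbm, hmb, hGm⟩ := hμ j
  set m := μ j with hm
  set c := b (j + 1) with hc
  have hmc : -c < -m := by linarith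
  -- KR at -m is 0
  have hKm : KR a b (-m) = 0 := by
    have h1 : GPK a b ((-m : ℝ) : ℂ) = 0 := by
      rw [show ((-m : ℝ) : ℂ) = -(m : ℂ) by push_cast; ring]; exact hGm
    rw [GPK_real] at h1
    exact_mod_cast h1
  -- the real equation for lam n
  have hreal : ∀ n : ℕ, 1 ≤ n → lam n + (n : ℝ) ^ 2 * KR a b (lam n) = 0 := by
    intro n hn
    have h3 := (hlam n hn).2.2
    rw [GPK_real] at h3
    exact_mod_cast h3
  rw [Metric.tendsto_atTop]
  intro ε hε
  set ε' : ℝ := min (ε / 2) ((c - m) / 2) with hε'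
  have hε'pos : 0 < ε' := lt_min (by linarith) (by linarith)
  set y : ℝ := -m - ε' with hy
  have hy1 : -c < y := by
    have : ε' ≤ (c - m) / 2 := min_le_right _ _
    simp only [hy]; linarith
  have hy2 : y < -m := by simp only [hy]; linarith
  -- δ = KR y > 0
  have hδ : 0 < KR a b y := by
    rw [← hKm, KR, KR]
    refine Summable.tsum_lt_tsum (i := j + 1)
      (term_mono a b ha hbmono j m hbm y (-m) hy1 hy2.le le_rfl) ?_
      (KR_summable a b α ha hsum hbmono j (-m) hmc)
      (KR_summable a b α ha hsum hbmono j y hy1)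
    have h1 : 0 < y + b (j + 1) := by linarith
    exact div_lt_div_of_pos_left (ha _) h1 (by linarith)
  -- c / n^2 → 0, so eventually c / n^2 < δ
  have htend : Tendsto (fun n : ℕ => c / (n : ℝ) ^ 2) atTop (𝓝 0) :=
    tendsto_const_nhds.div_atTop
      ((tendsto_pow_atTop two_ne_zero).comp tendsto_natCast_atTop_atTop)
  have hev : ∀ᶠ n : ℕ in atTop, c / (n : ℝ) ^ 2 < KR a b y :=
    htend.eventually (gt_mem_nhds hδ)
  obtain ⟨N, hN⟩ := (hev.and (eventually_ge_atTop 1)).exists_forall_of_atTop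
  refine ⟨N, fun n hn => ?_⟩
  obtain ⟨hsmall, hn1⟩ := hN n hn
  obtain ⟨hl1, hl2, _⟩ := hlam n hn1
  have hn2 : (0 : ℝ) < (n : ℝ) ^ 2 := by positivity
  have hKlam : KR a b (lam n) = -lam n / (n : ℝ) ^ 2 := by
    have := hreal n hn1
    field_simp
    linarith
  -- lam n > y
  have hylam : y < lam n := by
    by_contra hcon
    push_neg at hcon
    have hle : KR a b y ≤ KR a b (lam n) :=
      Summable.tsum_le_tsum (term_mono a b ha hbmono j m hbm (lam n) y hl1 hcon hy2.le)
        (KR_summable a b α ha hsum hbmono j y hy1)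
        (KR_summable a b α ha hsum hbmono j (lam n) hl1)
    have hlt : KR a b (lam n) < c / (n : ℝ) ^ 2 := by
      rw [hKlam]
      exact div_lt_div_of_pos_right (by linarith) hn2
    linarith
  have hdist : dist (lam n) (-m) < ε := by
    rw [Real.dist_eq, abs_lt]
    have : ε' ≤ ε / 2 := min_le_left _ _
    constructor <;> simp only [hy] at hylam <;> linarith
  exact hdist
end

section
/- There exists n₀ and, for each integer n ≥ n₀, a complex number λ_n with Im λ_n > 0 and G_n(λ_n) = 0, such that λ_n/n → iα as n → ∞; that is, G_n has a zero λ_n^+ = iαn + o(n) in the upper half-plane (and, by conjugation symmetry, a zero conj(λ_n^+) = −iαn + o(n) in the lower half-plane). -/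
/-!
Substituting `λ = n w` gives `G_n (n w) = n (w + K_n w)` with `K_n w = ∑ a_k / (w + b_k / n)`.
The poles of `K_n` shrink to `0`, so `w + K_n w` tends to `w + α² / w`, which has the simple zero
`iα` with derivative `2`. On the disc `|w - iα| ≤ α / 8`, where `Im w ≥ d = 7α/8`, the map
`(w + K_n w) / 2` is a `1/4`-Lipschitz perturbation of the identity as soon as the defect
`E_n = ∑ |a_k| min 1 (|b_k| / (n d))` is small, so it has a zero `w_n` with `|w_n - iα| = O(E_n)`;
and `E_n → 0` by dominated convergence. Conjugating gives the zero in the lower half-plane.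
-/

open Filter Topology

open Metric Complex

theorem ApproximatesLinearOn.exists_eq_zero_near_center {𝕜 E : Type*} [NontriviallyNormedField 𝕜]
    [NormedAddCommGroup E] [NormedSpace 𝕜 E] [CompleteSpace E] {f : E → E} {b : E} {r : ℝ}
    {c : NNReal} (hf : ApproximatesLinearOn f (ContinuousLinearMap.id 𝕜 E) (closedBall b r) c)
    (hc : c < 1) (hb : ‖f b‖ ≤ (1 - c) * r) :
    ∃ x, ‖x - b‖ ≤ ‖f b‖ / (1 - c) ∧ f x = 0 := by
  have hc' : (0 : ℝ) < 1 - c := sub_pos.2 (mod_cast hc)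
  let idInv : (ContinuousLinearMap.id 𝕜 E).NonlinearRightInverse :=
    ⟨id, 1, fun y => by simp, fun _ => rfl⟩
  have hε : ‖f b‖ / (1 - c) ≤ r := (div_le_iff₀' hc').2 hb
  have h0 : (0 : E) ∈ closedBall (f b) (((idInv.nnnorm : ℝ)⁻¹ - c) * (‖f b‖ / (1 - c))) := by
    simp [idInv, mul_div_cancel₀ _ hc'.ne']
  obtain ⟨x, hx, hfx⟩ := hf.surjOn_closedBall_of_nonlinearRightInverse idInv
    (by positivity) (closedBall_subset_closedBall hε) h0
  exact ⟨x, mem_closedBall_iff_norm.1 hx, hfx⟩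

namespace Complex

variable {u v : ℂ} {d : ℝ}

theorem sub_le_im_of_norm_sub_le {z : ℂ} {r : ℝ} (h : ‖u - z‖ ≤ r) : z.im - r ≤ u.im := by
  have := (abs_le.1 ((abs_im_le_norm (u - z)).trans h)).1
  simp only [sub_im] at this
  linarith

theorem norm_inv_le_of_le_im (hd : 0 < d) (hu : d ≤ u.im) : ‖u⁻¹‖ ≤ d⁻¹ := by
  rw [norm_inv]
  exact inv_anti₀ hd (hu.trans u.im_le_norm)

theorem norm_inv_add_ofReal_sub_inv_le (hd : 0 < d) (hu : d ≤ u.im) (c : ℝ) :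
    ‖(u + c)⁻¹ - u⁻¹‖ ≤ 2 / d * min 1 (|c| / d) := by
  have hu' : d ≤ (u + c).im := by simpa using hu
  have hinv := norm_inv_le_of_le_im hd hu
  have hinv' := norm_inv_le_of_le_im hd hu'
  have hu0 : u ≠ 0 := fun h => by simp [h] at hu; linarith
  have hu0' : u + c ≠ 0 := fun h => by simp [h] at hu'; linarith
  rw [mul_min_of_nonneg _ _ (by positivity), mul_one]
  refine le_min ?_ ?_
  · calc ‖(u + c)⁻¹ - u⁻¹‖ ≤ ‖(u + c)⁻¹‖ + ‖u⁻¹‖ := norm_sub_le _ _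
      _ ≤ d⁻¹ + d⁻¹ := add_le_add hinv' hinv
      _ = 2 / d := by ring
  · have hid : (u + c)⁻¹ - u⁻¹ = -c * ((u + c)⁻¹ * u⁻¹) := by field_simp; ring
    rw [hid, norm_mul, norm_neg, norm_real, Real.norm_eq_abs, norm_mul]
    calc |c| * (‖(u + c)⁻¹‖ * ‖u⁻¹‖) ≤ |c| * (d⁻¹ * d⁻¹) := by gcongr
      _ ≤ 2 / d * (|c| / d) := by
        rw [div_mul_div_comm, div_eq_mul_inv, mul_inv]
        gcongr
        linarith [abs_nonneg c]

theorem norm_inv_mul_add_ofReal_sub_inv_mul_le (hd : 0 < d) (hu : d ≤ u.im) (hv : d ≤ v.im)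
    (c : ℝ) : ‖((u + c) * (v + c))⁻¹ - (u * v)⁻¹‖ ≤ 4 / d ^ 2 * min 1 (|c| / d) := by
  have hid : ((u + c) * (v + c))⁻¹ - (u * v)⁻¹
      = (u + c)⁻¹ * ((v + c)⁻¹ - v⁻¹) + v⁻¹ * ((u + c)⁻¹ - u⁻¹) := by
    rw [mul_inv, mul_inv]; ring
  rw [hid]
  calc _ ≤ d⁻¹ * (2 / d * min 1 (|c| / d)) + d⁻¹ * (2 / d * min 1 (|c| / d)) := by
        refine (norm_add_le _ _).trans (add_le_add ?_ ?_) <;> rw [norm_mul] <;> gcongr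
        · exact norm_inv_le_of_le_im hd (by simpa using hu)
        · exact norm_inv_add_ofReal_sub_inv_le hd hv c
        · exact norm_inv_le_of_le_im hd hv
        · exact norm_inv_add_ofReal_sub_inv_le hd hu c
    _ = 4 / d ^ 2 * min 1 (|c| / d) := by ring

end Complex

noncomputable def shiftDefect (a c : ℕ → ℝ) (d : ℝ) : ℝ := ∑' k, |a k| * min 1 (|c k| / d)

section Series

variable {a c : ℕ → ℝ} {A d : ℝ}

theorem summable_ofReal_mul_of_norm_le (ha : Summable a) {X : ℕ → ℂ} {M : ℝ}
    (hX : ∀ k, ‖X k‖ ≤ M) : Summable fun k => (a k : ℂ) * X k :=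
  .of_norm_bounded (ha.abs.mul_right M) fun k => by
    rw [norm_mul, Complex.norm_real, Real.norm_eq_abs]
    exact mul_le_mul_of_nonneg_left (hX k) (abs_nonneg _)

theorem tsum_ofReal_mul_sub_mul (ha : HasSum a A) {X : ℕ → ℂ}
    (hX : Summable fun k => (a k : ℂ) * X k) (Y : ℂ) :
    ∑' k, (a k : ℂ) * X k - A * Y = ∑' k, (a k : ℂ) * (X k - Y) := by
  rw [← (Complex.hasSum_ofReal.2 ha).tsum_eq, ← tsum_mul_right,
    ← hX.tsum_sub ((Complex.hasSum_ofReal.2 ha).summable.mul_right Y)]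
  simp only [mul_sub]

theorem norm_tsum_ofReal_mul_le_shiftDefect (ha : Summable a) (hd : 0 < d) {X : ℕ → ℂ} {C : ℝ}
    (hX : ∀ k, ‖X k‖ ≤ C * min 1 (|c k| / d)) :
    ‖∑' k, (a k : ℂ) * X k‖ ≤ C * shiftDefect a c d := by
  have hmin : Summable fun k => |a k| * min 1 (|c k| / d) :=
    ha.abs.of_nonneg_of_le (fun k => by positivity)
      fun k => mul_le_of_le_one_right (abs_nonneg _) (min_le_left _ _)
  rw [shiftDefect, ← tsum_mul_left]
  refine tsum_of_norm_bounded (hmin.mul_left C).hasSum fun k => ?_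
  rw [norm_mul, Complex.norm_real, Real.norm_eq_abs, mul_left_comm]
  exact mul_le_mul_of_nonneg_left (hX k) (abs_nonneg _)

theorem tendsto_shiftDefect_zero {ι : Type*} {l : Filter ι} {c : ι → ℕ → ℝ} (ha : Summable a)
    (hd : 0 < d) (hc : ∀ k, Tendsto (fun i => c i k) l (𝓝 0)) :
    Tendsto (fun i => shiftDefect a (c i) d) l (𝓝 0) := by
  have hlim : ∀ k, Tendsto (fun i => |a k| * min 1 (|c i k| / d)) l (𝓝 0) := fun k => by
    simpa using (tendsto_const_nhds (x := (1 : ℝ)).min ((hc k).abs.div_const d)).const_mul |a k|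
  simpa [shiftDefect] using tendsto_tsum_of_dominated_convergence ha.abs hlim
    (.of_forall fun i k => by
      rw [Real.norm_of_nonneg (by positivity)]
      exact mul_le_of_le_one_right (abs_nonneg _) (min_le_left _ _))

end Series

section GPK

variable {a c : ℕ → ℝ} {A d : ℝ} {u w w' : ℂ}

theorem summable_ofReal_mul_inv_add_ofReal (ha : Summable a) (hu : 0 < u.im) :
    Summable fun k => (a k : ℂ) * (u + c k)⁻¹ :=
  summable_ofReal_mul_of_norm_le ha fun k => Complex.norm_inv_le_of_le_im hu (by simp)

theorem GPK_sub_GPK (ha : Summable a) (hw : 0 < w.im) (hw' : 0 < w'.im) :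
    GPK a c w - GPK a c w' = (w' - w) * ∑' k, (a k : ℂ) * ((w + c k) * (w' + c k))⁻¹ := by
  simp only [GPK, div_eq_mul_inv]
  rw [← (summable_ofReal_mul_inv_add_ofReal ha hw).tsum_sub
    (summable_ofReal_mul_inv_add_ofReal ha hw'), ← tsum_mul_left]
  refine tsum_congr fun k => ?_
  have h : w + c k ≠ 0 := fun h => hw.ne' (by simpa using congrArg Complex.im h)
  have h' : w' + c k ≠ 0 := fun h => hw'.ne' (by simpa using congrArg Complex.im h)
  field_simp
  ring

theorem norm_GPK_sub_mul_inv_le (ha : HasSum a A) (hd : 0 < d) (hu : d ≤ u.im) :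
    ‖GPK a c u - A * u⁻¹‖ ≤ 2 / d * shiftDefect a c d := by
  simp only [GPK, div_eq_mul_inv]
  rw [tsum_ofReal_mul_sub_mul ha (summable_ofReal_mul_inv_add_ofReal ha.summable (hd.trans_le hu))]
  exact norm_tsum_ofReal_mul_le_shiftDefect ha.summable hd fun k =>
    Complex.norm_inv_add_ofReal_sub_inv_le hd hu (c k)

theorem norm_tsum_mul_inv_mul_sub_le (ha : HasSum a A) (hd : 0 < d) (hw : d ≤ w.im)
    (hw' : d ≤ w'.im) :
    ‖∑' k, (a k : ℂ) * ((w + c k) * (w' + c k))⁻¹ - A * (w * w')⁻¹‖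
      ≤ 4 / d ^ 2 * shiftDefect a c d := by
  have hX : ∀ k, ‖((w + c k) * (w' + c k))⁻¹‖ ≤ d⁻¹ * d⁻¹ := fun k => by
    rw [mul_inv, norm_mul]
    gcongr <;> exact Complex.norm_inv_le_of_le_im hd (by simpa)
  rw [tsum_ofReal_mul_sub_mul ha (summable_ofReal_mul_of_norm_le ha.summable hX)]
  exact norm_tsum_ofReal_mul_le_shiftDefect ha.summable hd fun k =>
    Complex.norm_inv_mul_add_ofReal_sub_inv_mul_le hd hw hw' (c k)

end GPK

section RootNearIα

variable {a c : ℕ → ℝ} {α : ℝ} {w w' : ℂ}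

theorem seven_div_eight_le_im (hw : ‖w - I * α‖ ≤ α / 8) : 7 * α / 8 ≤ w.im := by
  have := Complex.sub_le_im_of_norm_sub_le hw
  simp only [mul_im, I_re, ofReal_im, mul_zero, I_im, ofReal_re, one_mul, zero_add] at this
  linarith

theorem norm_one_add_sq_mul_inv_le (hα : 0 < α) (hw : ‖w - I * α‖ ≤ α / 8)
    (hw' : ‖w' - I * α‖ ≤ α / 8) : ‖1 + (α : ℂ) ^ 2 * (w * w')⁻¹‖ ≤ 17 / 49 := by
  have hprod : 49 * α ^ 2 / 64 ≤ ‖w * w'‖ := by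
    rw [norm_mul]
    have h := (seven_div_eight_le_im hw).trans w.im_le_norm
    have h' := (seven_div_eight_le_im hw').trans w'.im_le_norm
    nlinarith
  have hnum : ‖w * w' + (α : ℂ) ^ 2‖ ≤ 17 * α ^ 2 / 64 := by
    have hid : w * w' + (α : ℂ) ^ 2 = I * α * ((w - I * α) + (w' - I * α))
        + (w - I * α) * (w' - I * α) := by
      linear_combination (α : ℂ) ^ 2 * I_sq
    have hIα : ‖I * (α : ℂ)‖ = α := by simp [abs_of_pos hα]
    rw [hid]
    calc _ ≤ ‖I * (α : ℂ)‖ * (‖w - I * α‖ + ‖w' - I * α‖) + ‖w - I * α‖ * ‖w' - I * α‖ := by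
          refine (norm_add_le _ _).trans (add_le_add ?_ (norm_mul_le _ _))
          exact (norm_mul_le _ _).trans (by gcongr; exact norm_add_le _ _)
      _ ≤ α * (α / 8 + α / 8) + α / 8 * (α / 8) := by
          rw [hIα]; gcongr
      _ = 17 * α ^ 2 / 64 := by ring
  have hww : w * w' ≠ 0 := norm_pos_iff.1 (lt_of_lt_of_le (by positivity) hprod)
  rw [show 1 + (α : ℂ) ^ 2 * (w * w')⁻¹ = (w * w' + (α : ℂ) ^ 2) / (w * w') by
    rw [add_div, div_self hww, div_eq_mul_inv], norm_div]
  calc _ ≤ 17 * α ^ 2 / 64 / (49 * α ^ 2 / 64) := div_le_div₀ (by positivity) hnum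
        (by positivity) hprod
    _ = 17 / 49 := by field_simp

theorem approximatesLinearOn_half_add_GPK (hα : 0 < α) (ha : HasSum a (α ^ 2))
    (hE : shiftDefect a c (7 * α / 8) ≤ α ^ 2 / 64) :
    ApproximatesLinearOn (fun w => (w + GPK a c w) / 2) (ContinuousLinearMap.id ℂ ℂ)
      (closedBall (I * α) (α / 8)) (1 / 4) := by
  intro w hw w' hw'
  rw [mem_closedBall_iff_norm] at hw hw'
  have hd : 0 < 7 * α / 8 := by positivity
  have him := seven_div_eight_le_im hw
  have him' := seven_div_eight_le_im hw'
  set P := ∑' k, (a k : ℂ) * ((w + c k) * (w' + c k))⁻¹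
  have hK := GPK_sub_GPK (c := c) ha.summable (hd.trans_le him) (hd.trans_le him')
  have hP : ‖1 + P‖ ≤ 1 / 2 := by
    have hdefect := norm_tsum_mul_inv_mul_sub_le (c := c) ha hd him him'
    push_cast at hdefect
    calc ‖1 + P‖ = ‖(1 + (α : ℂ) ^ 2 * (w * w')⁻¹) + (P - (α : ℂ) ^ 2 * (w * w')⁻¹)‖ := by
          congr 1; ring
      _ ≤ ‖1 + (α : ℂ) ^ 2 * (w * w')⁻¹‖ + ‖P - (α : ℂ) ^ 2 * (w * w')⁻¹‖ := norm_add_le _ _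
      _ ≤ 17 / 49 + 4 / (7 * α / 8) ^ 2 * (α ^ 2 / 64) :=
          add_le_add (norm_one_add_sq_mul_inv_le hα hw hw') (hdefect.trans (by gcongr))
      _ ≤ 1 / 2 := by field_simp; norm_num
  calc _ = ‖w - w'‖ * ‖1 + P‖ / 2 := by
        rw [ContinuousLinearMap.id_apply,
          show (w + GPK a c w) / 2 - (w' + GPK a c w') / 2 - (w - w') = -((w - w') * (1 + P)) / 2
            by linear_combination hK / 2]
        simp
    _ ≤ ‖w - w'‖ * (1 / 2) / 2 := by gcongr
    _ = ((1 / 4 : NNReal) : ℝ) * ‖w - w'‖ := by norm_num; ring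

theorem exists_add_GPK_eq_zero (hα : 0 < α) (ha : HasSum a (α ^ 2))
    (hE : shiftDefect a c (7 * α / 8) ≤ α ^ 2 / 64) :
    ∃ w : ℂ, 0 < w.im ∧ w + GPK a c w = 0 ∧
      ‖w - I * α‖ ≤ 2 / α * shiftDefect a c (7 * α / 8) := by
  set E := shiftDefect a c (7 * α / 8)
  have hE0 : 0 ≤ E := tsum_nonneg fun k => by positivity
  have hcenter : ‖(I * α + GPK a c (I * α)) / 2‖ ≤ 8 / (7 * α) * E := by
    have h := norm_GPK_sub_mul_inv_le (c := c) (u := I * α) ha (d := 7 * α / 8) (by positivity)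
      (by simp; linarith)
    have hIα : (I * α : ℂ) = -((α ^ 2 : ℝ) : ℂ) * (I * α)⁻¹ := by
      have : (α : ℂ) ≠ 0 := by exact_mod_cast hα.ne'
      field_simp
      push_cast
      linear_combination (α : ℂ) ^ 2 * I_sq
    rw [norm_div, Complex.norm_two,
      show I * α + GPK a c (I * α) = GPK a c (I * α) - (α ^ 2 : ℝ) * (I * α)⁻¹ by
        linear_combination hIα]
    calc _ ≤ 2 / (7 * α / 8) * E / 2 := by gcongr
      _ = 8 / (7 * α) * E := by field_simp
  have hsmall : 8 / (7 * α) * E ≤ (1 - ((1 / 4 : NNReal) : ℝ)) * (α / 8) := by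
    calc _ ≤ 8 / (7 * α) * (α ^ 2 / 64) := by gcongr
      _ ≤ _ := by norm_num; field_simp; linarith
  obtain ⟨w, hw, hzero⟩ := (approximatesLinearOn_half_add_GPK hα ha hE).exists_eq_zero_near_center
    (by norm_num) (hcenter.trans hsmall)
  have hbound : ‖w - I * α‖ ≤ 2 / α * E := by
    refine hw.trans ?_
    rw [div_le_iff₀ (by norm_num)]
    refine hcenter.trans ?_
    calc 8 / (7 * α) * E ≤ 3 / (2 * α) * E := by
          gcongr ?_ * E
          rw [div_le_div_iff₀ (by positivity) (by positivity)]
          linarith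
      _ = _ := by norm_num; field_simp; ring
  refine ⟨w, ?_, (div_eq_zero_iff.1 hzero).resolve_right two_ne_zero, hbound⟩
  refine lt_of_lt_of_le (by positivity) (seven_div_eight_le_im (hbound.trans ?_))
  calc 2 / α * E ≤ 2 / α * (α ^ 2 / 64) := by gcongr
    _ ≤ α / 8 := by field_simp; linarith

end RootNearIα

theorem GPG_natCast_mul (a b : ℕ → ℝ) {n : ℕ} (hn : n ≠ 0) (w : ℂ) :
    GPG a b n (n * w) = n * (w + GPK a (fun k => b k / n) w) := by
  have hn' : (n : ℂ) ≠ 0 := Nat.cast_ne_zero.2 hn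
  have hterm : ∀ k, (a k : ℂ) / (n * w + b k) = (n : ℂ)⁻¹ * ((a k : ℂ) / (w + (b k / n : ℝ))) :=
    fun k => by push_cast; field_simp
  rw [GPG, GPK, tsum_congr hterm, tsum_mul_left, GPK]
  field_simp

theorem GPG_conj (a b : ℕ → ℝ) (n : ℕ) (z : ℂ) :
    GPG a b n (starRingEnd ℂ z) = starRingEnd ℂ (GPG a b n z) := by
  simp only [GPG, GPK, map_add, map_mul, map_pow, map_natCast, conj_tsum, map_div₀, conj_ofReal]

theorem complex_zero_asymptotics_general
    (a b : ℕ → ℝ) (α : ℝ)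
    (hα : 0 < α) (hsum : HasSum a (α ^ 2)) :
    ∃ n₀ : ℕ, ∃ lam : ℕ → ℂ,
      (∀ n : ℕ, n₀ ≤ n →
        0 < (lam n).im ∧ GPG a b n (lam n) = 0 ∧
        (starRingEnd ℂ (lam n)).im < 0 ∧ GPG a b n (starRingEnd ℂ (lam n)) = 0) ∧
      Tendsto (fun n : ℕ => lam n / (n : ℂ)) atTop (𝓝 (Complex.I * (α : ℂ))) := by
  set E : ℕ → ℝ := fun n => shiftDefect a (fun k => b k / n) (7 * α / 8)
  have hE : Tendsto E atTop (𝓝 0) := tendsto_shiftDefect_zero hsum.summable (by positivity)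
    fun k => tendsto_const_div_atTop_nhds_zero_nat (b k)
  obtain ⟨n₀, hn₀⟩ := eventually_atTop.1
    ((hE.eventually (eventually_le_nhds (by positivity : 0 < α ^ 2 / 64))).and
      (eventually_ne_atTop 0))
  have hroot : ∀ n, ∃ w : ℂ, n₀ ≤ n →
      0 < w.im ∧ w + GPK a (fun k => b k / n) w = 0 ∧ ‖w - I * α‖ ≤ 2 / α * E n := fun n => by
    by_cases hn : n₀ ≤ n
    · exact (exists_add_GPK_eq_zero hα hsum (hn₀ n hn).1).imp fun w hw _ => hw
    · exact ⟨0, fun h => absurd h hn⟩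
  choose w hw using hroot
  refine ⟨n₀, fun n => n * w n, fun n hn => ?_, ?_⟩
  · obtain ⟨him, hzero, -⟩ := hw n hn
    have hG : GPG a b n (n * w n) = 0 := by
      rw [GPG_natCast_mul a b (hn₀ n hn).2, hzero, mul_zero]
    have him' : 0 < ((n : ℂ) * w n).im := by
      simpa using mul_pos (Nat.cast_pos.2 (Nat.pos_of_ne_zero (hn₀ n hn).2)) him
    exact ⟨him', hG, by simpa using him', by rw [GPG_conj, hG, map_zero]⟩
  · have hw_lim : Tendsto w atTop (𝓝 (I * α)) := tendsto_iff_norm_sub_tendsto_zero.2 <|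
      squeeze_zero' (.of_forall fun n => norm_nonneg _)
        (eventually_atTop.2 ⟨n₀, fun n hn => (hw n hn).2.2⟩) (by simpa using hE.const_mul (2 / α))
    refine hw_lim.congr' (eventually_atTop.2 ⟨n₀, fun n hn => ?_⟩)
    exact (mul_div_cancel_left₀ _ (Nat.cast_ne_zero.2 (hn₀ n hn).2)).symm

/-- For all large `n`, `G_n` has a zero `λ_n` in the upper half-plane with
`λ_n / n → iα` (i.e. `λ_n = iαn + o(n)`), and `conj λ_n` is a zero of `G_n` in the
lower half-plane. -/
theorem complex_zero_asymptotics
    (a b : ℕ → ℝ) (α : ℝ)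
    (ha : ∀ k, 0 < a k) (hα : 0 < α) (hsum : HasSum a (α ^ 2))
    (hb0 : 0 ≤ b 0) (hbmono : StrictMono b) (hbtop : Tendsto b atTop atTop) :
    ∃ n₀ : ℕ, ∃ lam : ℕ → ℂ,
      (∀ n : ℕ, n₀ ≤ n →
        0 < (lam n).im ∧ GPG a b n (lam n) = 0 ∧
        (starRingEnd ℂ (lam n)).im < 0 ∧ GPG a b n (starRingEnd ℂ (lam n)) = 0) ∧
      Tendsto (fun n : ℕ => lam n / (n : ℂ)) atTop (𝓝 (Complex.I * (α : ℂ))) :=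
  complex_zero_asymptotics_general a b α hα hsum
end
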